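/- With the above setup (the elements $y_n$ for $n \ge p+2$ defined by the linear recurrence $y_n = \sum_{i=1}^{p+1}(-1)^{i-1} x_i y_{n-i}$, and $\Phi$ the map $y_i \mapsto pt_i$ for $i \le p$, $y_{p+1} \mapsto t_{p+1}$): for every $n \in \mathbb{N}$ with $\delta_p(n(p-1)) = p-1$, we have $\Phi(y_n) \in p\,\mathbb{Z}_p[t_1,\dots,t_{p+1}]$. -/

import Mathlib

open MvPolynomial

/-- The algebra map `Φ` sending `y_i ↦ p t_i` for `i ≤ p` and `y_{p+1} ↦ t_{p+1}`
(variables indexed by `ℕ`, variable `i` standing for `y_i` resp. `t_i`). -/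
noncomputable def Phi (p : ℕ) : MvPolynomial ℕ ℚ →ₐ[ℚ] MvPolynomial ℕ ℚ :=
  MvPolynomial.aeval fun i =>
    if i ≤ p then (p : MvPolynomial ℕ ℚ) * MvPolynomial.X i else MvPolynomial.X i

/-- All coefficients are divisible by `p` (i.e. lie in `p ℤ_p` inside `ℚ`). -/
def CoeffsDivP (p : ℕ) (f : MvPolynomial ℕ ℚ) : Prop :=
  ∀ m : ℕ →₀ ℕ, MvPolynomial.coeff m f = 0 ∨ 1 ≤ padicValRat p (MvPolynomial.coeff m f)

open Finset

namespace PhiAux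

variable {p : ℕ} [hp : Fact p.Prime]

/-- all coefficients have `padicNorm p` at most `c` -/
def Bnd (p : ℕ) (c : ℚ) (f : MvPolynomial ℕ ℚ) : Prop :=
  ∀ m : ℕ →₀ ℕ, padicNorm p (MvPolynomial.coeff m f) ≤ c

lemma bnd_mono {c d : ℚ} (h : c ≤ d) {f : MvPolynomial ℕ ℚ} (hf : Bnd p c f) : Bnd p d f :=
  fun m => le_trans (hf m) h

lemma bnd_zero {c : ℚ} (hc : 0 ≤ c) : Bnd p c (0 : MvPolynomial ℕ ℚ) := by
  intro m; simp [coeff_zero, padicNorm.zero, hc]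

lemma norm_sum_le {α : Type*} {c : ℚ} (hc : 0 ≤ c) (s : Finset α) (f : α → ℚ)
    (h : ∀ i ∈ s, padicNorm p (f i) ≤ c) : padicNorm p (∑ i ∈ s, f i) ≤ c := by
  classical
  induction s using Finset.cons_induction with
  | empty => simpa [padicNorm.zero]
  | cons a s ha ih =>
      rw [Finset.sum_cons]
      refine le_trans padicNorm.nonarchimedean (max_le ?_ ?_)
      · exact h a (Finset.mem_cons_self a s)
      · exact ih fun i hi => h i (Finset.mem_cons.mpr (Or.inr hi))

lemma bnd_add {c : ℚ} {f g : MvPolynomial ℕ ℚ} (hf : Bnd p c f) (hg : Bnd p c g) :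
    Bnd p c (f + g) := by
  intro m
  rw [coeff_add]
  exact le_trans padicNorm.nonarchimedean (max_le (hf m) (hg m))

lemma bnd_neg {c : ℚ} {f : MvPolynomial ℕ ℚ} (hf : Bnd p c f) : Bnd p c (-f) := by
  intro m
  rw [coeff_neg, padicNorm.neg]
  exact hf m

lemma bnd_sub {c : ℚ} {f g : MvPolynomial ℕ ℚ} (hf : Bnd p c f) (hg : Bnd p c g) :
    Bnd p c (f - g) := by
  rw [sub_eq_add_neg]; exact bnd_add hf (bnd_neg hg)

lemma bnd_sum {α : Type*} {c : ℚ} (hc : 0 ≤ c) (s : Finset α) (F : α → MvPolynomial ℕ ℚ)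
    (h : ∀ i ∈ s, Bnd p c (F i)) : Bnd p c (∑ i ∈ s, F i) := by
  intro m
  rw [coeff_sum]
  exact norm_sum_le hc s _ fun i hi => h i hi m

lemma bnd_mul {c d : ℚ} {f g : MvPolynomial ℕ ℚ} (hc : 0 ≤ c) (hd : 0 ≤ d)
    (hf : Bnd p c f) (hg : Bnd p d g) : Bnd p (c * d) (f * g) := by
  classical
  intro m
  rw [coeff_mul]
  refine norm_sum_le (mul_nonneg hc hd) _ _ fun q hq => ?_
  rw [padicNorm.mul]
  exact mul_le_mul (hf q.1) (hg q.2) (padicNorm.nonneg _) hc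

lemma bnd_smul {c : ℚ} (q : ℚ) {f : MvPolynomial ℕ ℚ} (hf : Bnd p c f) :
    Bnd p (padicNorm p q * c) (q • f) := by
  intro m
  rw [coeff_smul, smul_eq_mul, padicNorm.mul]
  exact mul_le_mul le_rfl (hf m) (padicNorm.nonneg _) (padicNorm.nonneg _)

lemma bnd_C_mul {c : ℚ} (q : ℚ) {f : MvPolynomial ℕ ℚ} (hf : Bnd p c f) :
    Bnd p (padicNorm p q * c) (C q * f) := by
  intro m
  rw [coeff_C_mul, padicNorm.mul]
  exact mul_le_mul le_rfl (hf m) (padicNorm.nonneg _) (padicNorm.nonneg _)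

lemma bnd_X (i : ℕ) : Bnd p 1 (X i : MvPolynomial ℕ ℚ) := by
  intro m
  classical
  rw [coeff_X']
  split <;> simp [padicNorm.zero, padicNorm.one]

lemma bnd_one : Bnd p 1 (1 : MvPolynomial ℕ ℚ) := by
  intro m
  classical
  rw [coeff_one]
  split <;> simp [padicNorm.zero, padicNorm.one]

lemma bnd_pow {f : MvPolynomial ℕ ℚ} (hf : Bnd p 1 f) (k : ℕ) : Bnd p 1 (f ^ k) := by
  induction k with
  | zero => simpa using (bnd_one : Bnd p 1 _)
  | succ k ih =>
      have := bnd_mul (by norm_num) (by norm_num) ih hf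
      rw [one_mul] at this
      rw [pow_succ]
      exact this

/-- norm of inverse of a Nat not divisible by p is 1 -/
lemma norm_nat_inv_eq_one {i : ℕ} (h1 : 0 < i) (h2 : ¬ p ∣ i) :
    padicNorm p ((i : ℚ)⁻¹) = 1 := by
  have hi : padicNorm p (i : ℚ) = 1 := (padicNorm.nat_eq_one_iff i).mpr h2
  have hne : (i : ℚ) ≠ 0 := by exact_mod_cast h1.ne'
  have := padicNorm.mul (p := p) ((i : ℚ)⁻¹) (i : ℚ)
  rw [inv_mul_cancel₀ hne, padicNorm.one, hi, mul_one] at this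
  exact this.symm

lemma norm_p_eq : padicNorm p (p : ℚ) = (p : ℚ)⁻¹ := padicNorm.padicNorm_p hp.out.one_lt

/-- conversion to the statement of the theorem -/
lemma coeffsDivP_of_bnd {f : MvPolynomial ℕ ℚ} (h : Bnd p ((p : ℚ)⁻¹) f) :
    ∀ m : ℕ →₀ ℕ, MvPolynomial.coeff m f = 0 ∨ 1 ≤ padicValRat p (MvPolynomial.coeff m f) := by
  intro m
  by_cases h0 : MvPolynomial.coeff m f = 0
  · exact Or.inl h0
  · right
    have hb := h m
    rw [padicNorm.eq_zpow_of_nonzero h0] at hb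
    have hp1 : (1 : ℚ) < p := by exact_mod_cast hp.out.one_lt
    have : ((p : ℚ) ^ (-padicValRat p (MvPolynomial.coeff m f)) : ℚ) ≤ (p : ℚ) ^ (-1 : ℤ) := by
      rwa [zpow_neg_one]
    have := (zpow_le_zpow_iff_right₀ hp1).mp this
    omega


open Finset

/-- repunit with `u` digits 1 in base `p` -/
def R (p u : ℕ) : ℕ := ∑ i ∈ Finset.range u, p ^ i

lemma R_zero (p : ℕ) : R p 0 = 0 := by simp [R]

lemma R_succ (p u : ℕ) : R p (u + 1) = 1 + p * R p u := by
  rw [R, Finset.sum_range_succ', pow_zero, R, Finset.mul_sum]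
  rw [add_comm]
  congr 1
  exact Finset.sum_congr rfl fun i _ => by rw [pow_succ, mul_comm]

lemma R_mul (p : ℕ) (hp : 1 ≤ p) (u : ℕ) : (p - 1) * R p u + 1 = p ^ u := by
  obtain ⟨q, rfl⟩ : ∃ q, p = q + 1 := ⟨p - 1, by omega⟩
  induction u with
  | zero => simp [R_zero]
  | succ u ih =>
      rw [R_succ]
      have : (q + 1 - 1) * (1 + (q + 1) * R (q + 1) u) + 1
          = (q + 1) * ((q + 1 - 1) * R (q + 1) u + 1) := by
        simp only [Nat.add_sub_cancel]; ring
      rw [this, ih, pow_succ]; ring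

/-- stripping one base-`p` "layer" off a sum of repunits -/
lemma strip (p : ℕ) (w : ℕ → ℕ) (J : ℕ) :
    ∑ j ∈ Finset.range (J + 1), w j * R p j
      = (∑ j ∈ Finset.range J, w (j + 1))
        + p * ∑ j ∈ Finset.range J, w (j + 1) * R p j := by
  rw [Finset.sum_range_succ']
  simp only [R_zero, Nat.mul_zero, Nat.add_zero, R_succ]
  rw [Finset.mul_sum, ← Finset.sum_add_distrib]
  congr 1; ext j; ring

lemma decomp (p : ℕ) (hp : 0 < p) (a b : ℕ) :
    a + b + b / p + 1
      = (a % p + b % p + (b / p) % p + 1) + p * (a / p + b / p + (b / p) / p) := by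
  have h1 := Nat.div_add_mod a p
  have h2 := Nat.div_add_mod b p
  have h3 := Nat.div_add_mod (b / p) p
  have e : p * (a / p + b / p + (b / p) / p)
      = p * (a / p) + p * (b / p) + p * ((b / p) / p) := by ring
  rw [e]; omega

/-- The core vanishing lemma: with digit-wise no carries in `a + b`,
`a + b + b/p + 1` is not a sum of `c ≤ b % p` repunits. -/
lemma core (p : ℕ) (hp : 2 ≤ p) :
    ∀ b a c J : ℕ, ∀ w : ℕ → ℕ,
      (∀ i, a / p ^ i % p + b / p ^ i % p < p) →
      c ≤ b % p →
      (∑ j ∈ Finset.range J, w j = c) →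
      a + b + b / p + 1 = ∑ j ∈ Finset.range J, w j * R p j → False := by
  intro b
  induction b using Nat.strong_induction_on with
  | _ b IH =>
    intro a c J w hγ hc hsum heq
    by_cases hb : b = 0
    · subst hb
      have hc0 : c = 0 := by simpa using hc
      have hw : ∀ j ∈ Finset.range J, w j = 0 := by
        rw [← Finset.sum_eq_zero_iff]; omega
      have : ∑ j ∈ Finset.range J, w j * R p j = 0 :=
        Finset.sum_eq_zero fun j hj => by rw [hw j hj, Nat.zero_mul]
      simp only [Nat.zero_div] at heq
      omega
    match J, hsum with
    | 0, hsum =>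
        simp at heq
    | J + 1, hsum =>
        rw [strip] at heq
        rw [Finset.sum_range_succ'] at hsum
        set r : ℕ := ∑ j ∈ Finset.range J, w (j + 1) with hr
        set S' : ℕ := ∑ j ∈ Finset.range J, w (j + 1) * R p j with hS'
        have hrc : r ≤ c := by omega
        have hb0 : a % p + b % p < p := by simpa using hγ 0
        have hbpos : b % p < p := Nat.mod_lt _ (by omega)
        have hb1 : b / p % p < p := Nat.mod_lt _ (by omega)
        have hd := decomp p (by omega) a b
        -- M = λ + p * T
        set lam : ℕ := a % p + b % p + (b / p) % p + 1 with hlam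
        set T : ℕ := a / p + b / p + (b / p) / p with hT
        have hrltp : r < p := by omega
        have hMr : (r + p * S') % p = r := by
          rw [Nat.add_mul_mod_self_left, Nat.mod_eq_of_lt hrltp]
        by_cases hcase : lam < p
        · -- no wrap: r = lam > c ≥ r, contradiction
          have : (lam + p * T) % p = lam := by
            rw [Nat.add_mul_mod_self_left, Nat.mod_eq_of_lt hcase]
          have : r = lam := by rw [← hMr, ← this, ← heq, hd]
          omega
        · -- wrap
          obtain ⟨mu, hmu⟩ : ∃ mu, lam = p + mu := ⟨lam - p, by omega⟩
          have hmub1 : mu ≤ b / p % p := by omega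
          have heq2 : mu + p * (T + 1) = r + p * S' := by
            have : lam + p * T = mu + p * (T + 1) := by
              rw [hmu]; ring
            rw [← this, ← hd, heq]
          have hmur : mu = r := by
            have h1 : (mu + p * (T + 1)) % p = mu := by
              rw [Nat.add_mul_mod_self_left, Nat.mod_eq_of_lt (by omega)]
            rw [← hMr, ← heq2, h1]
          have hST : S' = T + 1 := by
            have : p * (T + 1) = p * S' := by omega
            exact (Nat.eq_of_mul_eq_mul_left (by omega) this).symm
          -- apply IH to (a/p, b/p)
          refine IH (b / p) (Nat.div_lt_self (by omega) (by omega)) (a / p) r J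
            (fun j => w (j + 1)) (fun i => ?_) (by omega) hr.symm ?_
          · have := hγ (i + 1)
            rwa [pow_succ', ← Nat.div_div_eq_div_mul, ← Nat.div_div_eq_div_mul] at this
          · rw [← hS', hST, hT]


lemma list_sum_getD (l : List ℕ) : l.sum = ∑ j ∈ Finset.range l.length, l.getD j 0 := by
  induction l with
  | nil => simp
  | cons a l ih =>
      rw [List.sum_cons, List.length_cons, Finset.sum_range_succ']
      simp [ih, add_comm]

lemma ofDigits_getD (p : ℕ) (l : List ℕ) :
    Nat.ofDigits p l = ∑ j ∈ Finset.range l.length, l.getD j 0 * p ^ j := by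
  induction l with
  | nil => simp [Nat.ofDigits]
  | cons a l ih =>
      rw [Nat.ofDigits_cons, List.length_cons, Finset.sum_range_succ']
      push_cast
      simp only [List.getD_cons_succ, List.getD_cons_zero, pow_zero, mul_one]
      rw [add_comm]
      congr 1
      rw [ih, Finset.mul_sum]
      exact Finset.sum_congr rfl fun i _ => by rw [pow_succ]; ring


section NT

lemma carry_of_digitsum (p : ℕ) (hp : 2 ≤ p) (a b n : ℕ)
    (hn : n = (a + b + 1) * p + (b + 1))
    (hδ : (Nat.digits p (n * (p - 1))).sum = p - 1) :
    ∃ i, p ≤ a / p ^ i % p + b / p ^ i % p := by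
  by_contra hcon
  push_neg at hcon
  set N := n * (p - 1) with hN
  set l := Nat.digits p N with hl
  set J := l.length with hJ
  set w : ℕ → ℕ := fun j => l.getD j 0 with hw
  have hsum : ∑ j ∈ Finset.range J, w j = p - 1 := by
    rw [← list_sum_getD]; exact hδ
  have hof : ∑ j ∈ Finset.range J, w j * p ^ j = N := by
    rw [← ofDigits_getD]; exact Nat.ofDigits_digits p N
  set S := ∑ j ∈ Finset.range J, w j * R p j with hS
  have key : (p - 1) * S + (p - 1) = N := by
    calc (p - 1) * S + (p - 1)
        = ∑ j ∈ Finset.range J, (p-1) * (w j * R p j) + ∑ j ∈ Finset.range J, w j := by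
          rw [hsum, hS, Finset.mul_sum]
      _ = ∑ j ∈ Finset.range J, ((p-1) * (w j * R p j) + w j) := Finset.sum_add_distrib.symm
      _ = ∑ j ∈ Finset.range J, w j * p ^ j := Finset.sum_congr rfl fun j _ => by
          rw [← R_mul p (by omega) j]; ring
      _ = N := hof
  have hSn : S + 1 = n := by
    have h2 : (p - 1) * (S + 1) = (p - 1) * n := by
      rw [hN, mul_comm n (p-1)] at key
      rw [Nat.mul_add, Nat.mul_one, key]
    exact Nat.eq_of_mul_eq_mul_left (by omega) h2
  have hSv : S = (a + b + 1) * p + b := by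
    set t := (a + b + 1) * p with ht
    omega
  match hJJ : J, hsum, hS with
  | 0, hsum, hS =>
      have hple : p ≤ (a + b + 1) * p := Nat.le_mul_of_pos_left p (by omega)
      simp only [Finset.range_zero, Finset.sum_empty] at hS
      omega
  | J' + 1, hsum, hS =>
      rw [strip] at hS
      rw [Finset.sum_range_succ'] at hsum
      set r : ℕ := ∑ j ∈ Finset.range J', w (j + 1) with hr
      set S₁ : ℕ := ∑ j ∈ Finset.range J', w (j + 1) * R p j with hS₁
      have hrp : r < p := by omega
      have hrb : r = b % p := by
        have h1 : S % p = r := by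
          rw [hS, Nat.add_mul_mod_self_left, Nat.mod_eq_of_lt hrp]
        have h2 : S % p = b % p := by
          rw [hSv, add_comm, Nat.add_mul_mod_self_right]
        omega
      have hS1 : a + b + b / p + 1 = S₁ := by
        have hdec : S = p * (a + b + b / p + 1) + b % p := by
          calc S = (a + b + 1) * p + b := hSv
            _ = (a + b + 1) * p + (p * (b / p) + b % p) := by rw [Nat.div_add_mod]
            _ = p * (a + b + b / p + 1) + b % p := by ring
        have : p * (a + b + b / p + 1) = p * S₁ := by omega
        exact Nat.eq_of_mul_eq_mul_left (by omega) this
      exact core p hp b a (b % p) J' (fun j => w (j + 1))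
        (fun i => hcon i) (le_refl _) (by rw [← hr, hrb]) hS1

lemma NT_dvd (p : ℕ) (hp : p.Prime) (a b n : ℕ)
    (hn : n = (a + b + 1) * p + (b + 1))
    (hδ : (Nat.digits p (n * (p - 1))).sum = p - 1) :
    p ∣ Nat.choose (a + b) b := by
  haveI : Fact p.Prime := ⟨hp⟩
  obtain ⟨i, hi⟩ := carry_of_digitsum p hp.two_le a b n hn hδ
  have ha : (a / p ^ i % p) * p ^ i ≤ a % p ^ (i + 1) := by
    rw [← Nat.mod_mul_right_div_self, ← pow_succ]
    exact Nat.div_mul_le_self _ _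
  have hb : (b / p ^ i % p) * p ^ i ≤ b % p ^ (i + 1) := by
    rw [← Nat.mod_mul_right_div_self, ← pow_succ]
    exact Nat.div_mul_le_self _ _
  have hcar : p ^ (i + 1) ≤ b % p ^ (i + 1) + a % p ^ (i + 1) := by
    have h1 : p * p ^ i ≤ (a / p ^ i % p + b / p ^ i % p) * p ^ i :=
      Nat.mul_le_mul_right _ hi
    have h2 : (a / p ^ i % p + b / p ^ i % p) * p ^ i
        = (a / p ^ i % p) * p ^ i + (b / p ^ i % p) * p ^ i := add_mul _ _ _
    have h3 : p ^ (i + 1) = p * p ^ i := by rw [pow_succ, mul_comm]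
    linarith
  have hple : p ^ (i + 1) ≤ a + b := by
    have h1 := Nat.mod_le b (p ^ (i + 1))
    have h2 := Nat.mod_le a (p ^ (i + 1))
    omega
  have hilog : i + 1 ≤ Nat.log p (a + b) := Nat.le_log_of_pow_le hp.one_lt hple
  have hval := padicValNat_choose' (p := p) (k := b) (n := a)
    (b := Nat.log p (a + b) + 1) (lt_add_one _)
  have hpos : 0 < padicValNat p ((a + b).choose b) := by
    rw [hval]
    apply Finset.card_pos.mpr
    exact ⟨i + 1, Finset.mem_filter.mpr ⟨Finset.mem_Ico.mpr ⟨by omega, by omega⟩, hcar⟩⟩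
  exact (dvd_iff_padicValNat_ne_zero (Nat.choose_pos (Nat.le_add_left b a)).ne').mpr (by omega)

end NT



/-- one term of the closed form -/
noncomputable def trm (p N M : ℕ) : MvPolynomial ℕ ℚ :=
  if M * p < N ∧ N ≤ M * p + M then
    C (((M - 1).choose (N - M * p - 1) : ℚ))
      * X p ^ (M - (N - M * p)) * X (p + 1) ^ (N - M * p)
  else 0

/-- the mod-p model of `Φ(y n)` -/
noncomputable def sig (p n : ℕ) : MvPolynomial ℕ ℚ :=
  ∑ M ∈ Finset.range (n + 1), trm p n M

lemma sig_low {p j : ℕ} (hj : j ≤ p) : sig p j = 0 := by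
  refine Finset.sum_eq_zero fun M _ => ?_
  rw [trm, if_neg]
  rintro ⟨h1, h2⟩
  match M with
  | 0 => simp at h1 h2; omega
  | M + 1 =>
      have hle : p ≤ (M + 1) * p := Nat.le_mul_of_pos_left p (by omega)
      set t := (M + 1) * p
      omega

lemma sig_p1 {p : ℕ} (hp : 1 ≤ p) : sig p (p + 1) = X (p + 1) := by
  rw [sig]
  rw [Finset.sum_eq_single_of_mem 1 (by simp)]
  · rw [trm, if_pos (by omega)]
    simp
  · intro M _ hM1
    rw [trm, if_neg]
    rintro ⟨h1, h2⟩
    match M with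
    | 0 => simp at h1 h2
    | 1 => exact hM1 rfl
    | M + 2 =>
        have hle : 2 * p ≤ (M + 2) * p := Nat.mul_le_mul_right p (by omega)
        set t := (M + 2) * p
        omega

lemma trm_key {p e m : ℕ} (hp : 1 ≤ p) (he : 1 ≤ e) :
    trm p (e + 1 + p) (m + 1) = X p * trm p (e + 1) m + X (p + 1) * trm p e m := by
  simp only [trm]
  rw [show (m + 1) * p = m * p + p from by ring]
  set t := m * p with ht
  have hm0 : m = 0 → t = 0 := fun h => by rw [ht, h, Nat.zero_mul]
  by_cases hA : t ≤ e ∧ e ≤ t + m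
  · obtain ⟨h1, h2⟩ := hA
    have hm1 : 1 ≤ m := by
      rcases Nat.eq_zero_or_pos m with h | h
      · have := hm0 h; omega
      · exact h
    rw [if_pos (show t + p < e + 1 + p ∧ e + 1 + p ≤ t + p + (m + 1) from by omega)]
    rw [show e + 1 + p - (t + p) = e + 1 - t from by omega,
      show m + 1 - 1 = m from rfl]
    by_cases hB : e = t + m
    · -- k = m+1 : only the second term survives
      rw [if_neg (show ¬(t < e + 1 ∧ e + 1 ≤ t + m) from by omega),
        if_pos (show t < e ∧ e ≤ t + m from by omega)]
      rw [show e + 1 - t - 1 = m from by omega, show e - t - 1 = m - 1 from by omega,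
        show e + 1 - t = m + 1 from by omega, show e - t = m from by omega,
        show m + 1 - (m + 1) = 0 from by omega, show m - m = 0 from by omega,
        Nat.choose_self, Nat.choose_self, pow_succ]
      push_cast
      simp only [map_one, one_mul, pow_zero, mul_zero, zero_add, mul_one]
      ring
    · by_cases hC : t = e
      · -- k = 1 : only the first term survives
        rw [if_pos (show t < e + 1 ∧ e + 1 ≤ t + m from by omega),
          if_neg (show ¬(t < e ∧ e ≤ t + m) from by omega)]
        obtain ⟨M, rfl⟩ : ∃ M, m = M + 1 := ⟨m - 1, by omega⟩
        rw [show e + 1 - t - 1 = 0 from by omega, show e + 1 - t = 1 from by omega,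
          show M + 1 + 1 - 1 = M + 1 from rfl, show M + 1 - 1 = M from rfl,
          Nat.choose_zero_right, Nat.choose_zero_right, pow_succ]
        push_cast
        simp only [map_one, one_mul, mul_zero, add_zero, pow_one]
        ring
      · -- 2 ≤ k ≤ m : Pascal
        rw [if_pos (show t < e + 1 ∧ e + 1 ≤ t + m from by omega),
          if_pos (show t < e ∧ e ≤ t + m from by omega)]
        obtain ⟨M, rfl⟩ : ∃ M, m = M + 1 := ⟨m - 1, by omega⟩
        obtain ⟨K, hK⟩ : ∃ K, e - t = K + 1 := ⟨e - t - 1, by omega⟩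
        have hKM : K + 1 ≤ M := by omega
        rw [show e + 1 - t - 1 = K + 1 from by omega,
          show e - t - 1 = K from by omega,
          show e - t = K + 1 from hK,
          show e + 1 - t = K + 2 from by omega,
          show M + 1 + 1 - (K + 2) = M - K from by omega,
          show M + 1 - 1 = M from rfl,
          show M + 1 - (K + 2) = M - K - 1 from by omega,
          show M + 1 - (K + 1) = M - K from by omega,
          Nat.choose_succ_succ M K]
        obtain ⟨D, hD⟩ : ∃ D, M - K = D + 1 := ⟨M - K - 1, by omega⟩
        rw [hD, show D + 1 - 1 = D from rfl]
        simp only [Nat.succ_eq_add_one]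
        push_cast
        rw [C_add]
        ring
  · -- all conditions false
    rw [if_neg (show ¬(t + p < e + 1 + p ∧ e + 1 + p ≤ t + p + (m + 1)) from by omega),
      if_neg (show ¬(t < e + 1 ∧ e + 1 ≤ t + m) from by omega),
      if_neg (show ¬(t < e ∧ e ≤ t + m) from by omega)]
    simp

lemma trm_zero {p N : ℕ} (hN : 1 ≤ N) : trm p N 0 = 0 := by
  rw [trm, if_neg]; rintro ⟨-, h2⟩; simp at h2; omega

lemma trm_big {p N M : ℕ} (hp : 1 ≤ p) (h : N < M) : trm p N M = 0 := by
  rw [trm, if_neg]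
  rintro ⟨h1, -⟩
  have hMt : M ≤ M * p := Nat.le_mul_of_pos_right M (by omega)
  set t := M * p
  omega

lemma sig_rec {p : ℕ} (hp : 1 ≤ p) (e : ℕ) (he : 1 ≤ e) :
    sig p (e + 1 + p) = X p * sig p (e + 1) + X (p + 1) * sig p e := by
  have hs0 : sig p (e + 1 + p) = ∑ M ∈ Finset.range (e + 1 + p), trm p (e + 1 + p) (M + 1) := by
    rw [sig, Finset.sum_range_succ', trm_zero (by omega), add_zero]
  have hstep : ∑ M ∈ Finset.range (e + 1 + p), trm p (e + 1 + p) (M + 1)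
      = ∑ M ∈ Finset.range (e + 1 + p), (X p * trm p (e + 1) M + X (p + 1) * trm p e M) :=
    Finset.sum_congr rfl fun M _ => trm_key hp he
  have hs1 : ∑ M ∈ Finset.range (e + 1 + p), trm p (e + 1) M = sig p (e + 1) := by
    rw [sig]
    exact (Finset.sum_subset (Finset.range_subset_range.mpr (by omega)) fun M hM hM2 => by
      simp only [Finset.mem_range] at hM hM2
      exact trm_big hp (by omega)).symm
  have hs2 : ∑ M ∈ Finset.range (e + 1 + p), trm p e M = sig p e := by
    rw [sig]
    exact (Finset.sum_subset (Finset.range_subset_range.mpr (by omega)) fun M hM hM2 => by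
      simp only [Finset.mem_range] at hM hM2
      exact trm_big hp (by omega)).symm
  rw [hs0, hstep, Finset.sum_add_distrib, ← Finset.mul_sum, ← Finset.mul_sum, hs1, hs2]

variable {p : ℕ} [hp : Fact p.Prime]

lemma bnd_trm {c : ℚ} (q : ℚ) (hq : padicNorm p q ≤ c) (hc : 0 ≤ c) (i j a b : ℕ) :
    Bnd p c (C q * X i ^ a * X j ^ b) := by
  have h1 := bnd_C_mul (p := p) q (bnd_pow (bnd_X i) a)
  have h2 := bnd_mul (p := p) (mul_nonneg (padicNorm.nonneg _) zero_le_one) zero_le_one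
    h1 (bnd_pow (bnd_X j) b)
  refine bnd_mono ?_ h2
  calc padicNorm p q * 1 * 1 = padicNorm p q := by ring
    _ ≤ c := hq

lemma sig_int (n : ℕ) : Bnd p 1 (sig p n) := by
  refine bnd_sum zero_le_one _ _ fun M _ => ?_
  rw [trm]
  split
  · exact bnd_trm _ (padicNorm.of_nat _) zero_le_one _ _ _ _
  · exact bnd_zero zero_le_one

lemma sig_div (n : ℕ) (hδ : (Nat.digits p (n * (p - 1))).sum = p - 1) :
    Bnd p ((p : ℚ)⁻¹) (sig p n) := by
  have hpinv : (0 : ℚ) ≤ (p : ℚ)⁻¹ := by positivity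
  refine bnd_sum hpinv _ _ fun M _ => ?_
  rw [trm]
  split
  case isFalse => exact bnd_zero hpinv
  case isTrue h =>
    obtain ⟨h1, h2⟩ := h
    set t := M * p with htdef
    set k := n - t with hk
    set a := M - k with ha
    set b := k - 1 with hb
    have hM1 : 1 ≤ M := by
      rcases Nat.eq_zero_or_pos M with h | h
      · subst h; simp at h1 h2; omega
      · exact h
    have hn' : n = (a + b + 1) * p + (b + 1) := by
      rw [show a + b + 1 = M from by omega]
      omega
    obtain ⟨u, hu⟩ := NT_dvd p hp.out a b n hn' hδ
    have hco : (M - 1).choose (n - t - 1) = p * u := by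
      rw [show M - 1 = a + b from by omega, show n - t - 1 = b from by omega, hu]
    rw [hco]
    refine bnd_trm _ ?_ hpinv _ _ _ _
    push_cast
    rw [padicNorm.mul, norm_p_eq]
    calc (p:ℚ)⁻¹ * padicNorm p (u : ℚ) ≤ (p:ℚ)⁻¹ * 1 :=
      mul_le_mul_of_nonneg_left (padicNorm.of_nat u) hpinv
    _ = (p:ℚ)⁻¹ := mul_one _


end PhiAux


namespace PhiAux

lemma Phi_X_le {p i : ℕ} (h : i ≤ p) :
    Phi p (X i) = C (p : ℚ) * X i := by
  rw [Phi, aeval_X, if_pos h, map_natCast]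

lemma Phi_X_gt {p i : ℕ} (h : ¬ i ≤ p) : Phi p (X i) = X i := by
  rw [Phi, aeval_X, if_neg h]

end PhiAux

namespace PhiAux

section Xfacts

variable {p : ℕ} [hp : Fact p.Prime] {x : ℕ → MvPolynomial ℕ ℚ}

lemma pinv_nonneg : (0:ℚ) ≤ (p : ℚ)⁻¹ := by positivity

lemma pinv_le_one : ((p : ℚ))⁻¹ ≤ 1 := by
  have h1 : (1:ℚ) ≤ (p:ℚ) := by exact_mod_cast hp.out.one_le
  have h0 : (0:ℚ) < (p:ℚ) := by positivity
  rw [inv_le_one_iff₀]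
  right; exact h1

lemma bnd_neg_one_pow {c : ℚ} (j : ℕ) {f : MvPolynomial ℕ ℚ} (hf : Bnd p c f) :
    Bnd p c ((-1 : MvPolynomial ℕ ℚ) ^ j * f) := by
  rcases Nat.even_or_odd j with h | h
  · rw [h.neg_one_pow, one_mul]; exact hf
  · rw [h.neg_one_pow, neg_one_mul]; exact bnd_neg hf

lemma phix_div (hx0 : x 0 = 1)
    (hxr : ∀ n, 1 ≤ n → n ≤ p + 1 →
      x n = (n : ℚ)⁻¹ • ∑ i ∈ Finset.range n,
        (-1 : MvPolynomial ℕ ℚ) ^ i * x (n - (i + 1)) * MvPolynomial.X (i + 1)) :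
    ∀ i, 1 ≤ i → i ≤ p - 1 → Bnd p ((p:ℚ)⁻¹) (Phi p (x i)) := by
  have hp2 := hp.out.two_le
  intro i
  induction i using Nat.strong_induction_on with
  | _ i IH =>
    intro h1 h2
    rw [hxr i h1 (by omega), map_smul, map_sum]
    have hnorm : padicNorm p ((i:ℚ)⁻¹) = 1 :=
      norm_nat_inv_eq_one (by omega) (fun hd => by have := Nat.le_of_dvd (by omega) hd; omega)
    have hsum : Bnd p ((p:ℚ)⁻¹)
        (∑ j ∈ Finset.range i, Phi p ((-1 : MvPolynomial ℕ ℚ) ^ j * x (i - (j+1)) * X (j+1))) := by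
      refine bnd_sum pinv_nonneg _ _ fun j hj => ?_
      simp only [Finset.mem_range] at hj
      simp only [map_mul, map_pow, map_neg, map_one]
      rw [Phi_X_le (show j + 1 ≤ p from by omega)]
      have hxint : Bnd p 1 (Phi p (x (i - (j+1)))) := by
        rcases Nat.eq_zero_or_pos (i - (j+1)) with h | h
        · rw [h, hx0, map_one]; exact bnd_one
        · exact bnd_mono pinv_le_one (IH _ (by omega) h (by omega))
      have hbX : Bnd p ((padicNorm p ((p:ℚ))) * 1) (C ((p:ℚ)) * X (j+1)) :=
        bnd_C_mul _ (bnd_X _)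
      rw [norm_p_eq, mul_one] at hbX
      have := bnd_mul (p := p) zero_le_one pinv_nonneg
        (bnd_neg_one_pow j hxint) hbX
      rw [one_mul] at this
      exact this
    have := bnd_smul (p := p) ((i:ℚ)⁻¹) hsum
    rw [hnorm, one_mul] at this
    exact this

lemma phix_p (hx0 : x 0 = 1)
    (hxr : ∀ n, 1 ≤ n → n ≤ p + 1 →
      x n = (n : ℚ)⁻¹ • ∑ i ∈ Finset.range n,
        (-1 : MvPolynomial ℕ ℚ) ^ i * x (n - (i + 1)) * MvPolynomial.X (i + 1)) :
    Bnd p ((p:ℚ)⁻¹) (Phi p (x p) - (-1 : MvPolynomial ℕ ℚ)^(p-1) * X p) := by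
  have hp2 := hp.out.two_le
  rw [hxr p (by omega) (by omega), map_smul, map_sum]
  have hterm : ∀ j ∈ Finset.range p,
      Phi p ((-1 : MvPolynomial ℕ ℚ)^j * x (p-(j+1)) * X (j+1))
        = C ((p:ℚ)) * ((-1 : MvPolynomial ℕ ℚ)^j * Phi p (x (p-(j+1))) * X (j+1)) := by
    intro j hj
    simp only [Finset.mem_range] at hj
    simp only [map_mul, map_pow, map_neg, map_one]
    rw [Phi_X_le (show j + 1 ≤ p from by omega)]
    ring
  rw [Finset.sum_congr rfl hterm, ← Finset.mul_sum]
  have hpne : ((p:ℚ)) ≠ 0 := Nat.cast_ne_zero.mpr (by omega)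
  rw [← smul_eq_C_mul, smul_smul, inv_mul_cancel₀ hpne, one_smul]
  obtain ⟨q, hq⟩ : ∃ q, p = q + 1 := ⟨p - 1, by omega⟩
  have hrange : Finset.range p = Finset.range (q + 1) := by rw [hq]
  rw [hrange, Finset.sum_range_succ]
  have htop : (-1 : MvPolynomial ℕ ℚ)^q * Phi p (x (p-(q+1))) * X (q+1)
      = (-1 : MvPolynomial ℕ ℚ)^(p-1) * X p := by
    rw [show p - (q+1) = 0 from by omega, hx0, map_one,
      show q + 1 = p from by omega, show q = p - 1 from by omega]
    ring
  rw [htop, show ∀ S A : MvPolynomial ℕ ℚ, S + A - A = S from fun S A => by ring]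
  refine bnd_sum pinv_nonneg _ _ fun j hj => ?_
  simp only [Finset.mem_range] at hj
  have hdiv := phix_div hx0 hxr (p - (j+1)) (by omega) (by omega)
  have := bnd_mul (p := p) pinv_nonneg zero_le_one
    (bnd_neg_one_pow j hdiv) (bnd_X (j+1))
  rwa [mul_one] at this

lemma phix_int (hx0 : x 0 = 1)
    (hxr : ∀ n, 1 ≤ n → n ≤ p + 1 →
      x n = (n : ℚ)⁻¹ • ∑ i ∈ Finset.range n,
        (-1 : MvPolynomial ℕ ℚ) ^ i * x (n - (i + 1)) * MvPolynomial.X (i + 1)) :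
    ∀ j, j ≤ p → Bnd p 1 (Phi p (x j)) := by
  have hp2 := hp.out.two_le
  intro j hj
  rcases Nat.eq_zero_or_pos j with h | h
  · rw [h, hx0, map_one]; exact bnd_one
  rcases Nat.lt_or_ge j p with h2 | h2
  · exact bnd_mono pinv_le_one (phix_div hx0 hxr j h (by omega))
  · have hjp : j = p := by omega
    rw [hjp]
    have hE : Bnd p 1 ((-1 : MvPolynomial ℕ ℚ)^(p-1) * X p) :=
      bnd_neg_one_pow _ (bnd_X _)
    have := bnd_add (bnd_mono pinv_le_one (phix_p hx0 hxr)) hE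
    rwa [sub_add_cancel] at this

lemma phix_p1 (hx0 : x 0 = 1)
    (hxr : ∀ n, 1 ≤ n → n ≤ p + 1 →
      x n = (n : ℚ)⁻¹ • ∑ i ∈ Finset.range n,
        (-1 : MvPolynomial ℕ ℚ) ^ i * x (n - (i + 1)) * MvPolynomial.X (i + 1)) :
    Bnd p ((p:ℚ)⁻¹) (Phi p (x (p+1)) - (-1 : MvPolynomial ℕ ℚ)^p * X (p+1)) := by
  have hp2 := hp.out.two_le
  rw [hxr (p+1) (by omega) le_rfl, map_smul, map_sum, Finset.sum_range_succ]
  have htop : Phi p ((-1 : MvPolynomial ℕ ℚ)^p * x (p + 1 - (p+1)) * X (p+1))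
      = (-1 : MvPolynomial ℕ ℚ)^p * X (p+1) := by
    rw [show p + 1 - (p+1) = 0 from by omega, hx0]
    simp only [map_mul, map_pow, map_neg, map_one]
    rw [Phi_X_gt (by omega)]
    ring
  rw [htop]
  have hterm : ∀ j ∈ Finset.range p,
      Phi p ((-1 : MvPolynomial ℕ ℚ)^j * x (p + 1 - (j+1)) * X (j+1))
        = C ((p:ℚ)) * ((-1 : MvPolynomial ℕ ℚ)^j * Phi p (x (p + 1 - (j+1))) * X (j+1)) := by
    intro j hj
    simp only [Finset.mem_range] at hj
    simp only [map_mul, map_pow, map_neg, map_one]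
    rw [Phi_X_le (show j + 1 ≤ p from by omega)]
    ring
  rw [Finset.sum_congr rfl hterm, ← Finset.mul_sum]
  set S := ∑ j ∈ Finset.range p,
    (-1 : MvPolynomial ℕ ℚ)^j * Phi p (x (p + 1 - (j+1))) * X (j+1) with hSdef
  set c : ℚ := (((p+1 : ℕ)) : ℚ)⁻¹ with hcdef
  have hpc : ((p+1:ℕ) : ℚ) ≠ 0 := Nat.cast_ne_zero.mpr (by omega)
  have hkey : c • (C ((p:ℚ)) * S + (-1 : MvPolynomial ℕ ℚ)^p * X (p+1))
        - (-1 : MvPolynomial ℕ ℚ)^p * X (p+1)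
      = c • (C ((p:ℚ)) * S) + (c - 1) • ((-1 : MvPolynomial ℕ ℚ)^p * X (p+1)) := by
    rw [smul_eq_C_mul, smul_eq_C_mul, smul_eq_C_mul, C_sub, C_1]
    ring
  rw [hkey]
  have hcnorm : padicNorm p c = 1 := by
    rw [hcdef]
    refine norm_nat_inv_eq_one (by omega) (fun hd => ?_)
    rcases hd with ⟨u, hu⟩
    match u, hu with
    | 0, hu => omega
    | 1, hu => omega
    | u + 2, hu => nlinarith
  have hSint : Bnd p 1 S := by
    rw [hSdef]
    refine bnd_sum zero_le_one _ _ fun j hj => ?_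
    simp only [Finset.mem_range] at hj
    have h1 := phix_int hx0 hxr (p + 1 - (j+1)) (by omega)
    have := bnd_mul (p := p) zero_le_one zero_le_one
      (bnd_neg_one_pow j h1) (bnd_X (j+1))
    rwa [mul_one] at this
  refine bnd_add ?_ ?_
  · have h1 := bnd_C_mul (p := p) ((p:ℚ)) hSint
    rw [norm_p_eq, mul_one] at h1
    have h2 := bnd_smul (p := p) c h1
    rw [hcnorm, one_mul] at h2
    exact h2
  · have hc1 : c - 1 = -((p:ℚ) * c) := by
      rw [hcdef]
      push_cast
      field_simp
      ring
    have hnorm2 : padicNorm p (c - 1) = (p:ℚ)⁻¹ := by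
      rw [hc1, padicNorm.neg, padicNorm.mul, norm_p_eq, hcdef]
      rw [show padicNorm p (((p+1:ℕ):ℚ))⁻¹ = 1 from by rw [← hcdef]; exact hcnorm]
      rw [mul_one]
    have h3 := bnd_smul (p := p) (c - 1) (bnd_neg_one_pow p (bnd_X (p+1)))
    rw [hnorm2, mul_one] at h3
    exact h3

lemma phix_int1 (hx0 : x 0 = 1)
    (hxr : ∀ n, 1 ≤ n → n ≤ p + 1 →
      x n = (n : ℚ)⁻¹ • ∑ i ∈ Finset.range n,
        (-1 : MvPolynomial ℕ ℚ) ^ i * x (n - (i + 1)) * MvPolynomial.X (i + 1)) :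
    ∀ j, j ≤ p + 1 → Bnd p 1 (Phi p (x j)) := by
  intro j hj
  rcases Nat.lt_or_ge j (p+1) with h | h
  · exact phix_int hx0 hxr j (by omega)
  · have hjp : j = p + 1 := by omega
    rw [hjp]
    have hE : Bnd p 1 ((-1 : MvPolynomial ℕ ℚ)^p * X (p+1)) :=
      bnd_neg_one_pow _ (bnd_X _)
    have := bnd_add (bnd_mono pinv_le_one (phix_p1 hx0 hxr)) hE
    rwa [sub_add_cancel] at this

lemma main_ind (hx0 : x 0 = 1)
    (hxr : ∀ n, 1 ≤ n → n ≤ p + 1 →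
      x n = (n : ℚ)⁻¹ • ∑ i ∈ Finset.range n,
        (-1 : MvPolynomial ℕ ℚ) ^ i * x (n - (i + 1)) * MvPolynomial.X (i + 1))
    {y : ℕ → MvPolynomial ℕ ℚ}
    (hy1 : ∀ n, 1 ≤ n → n ≤ p + 1 → y n = MvPolynomial.X n)
    (hyrec : ∀ n, p + 2 ≤ n →
      y n = ∑ i ∈ Finset.range (p + 1),
        (-1 : MvPolynomial ℕ ℚ) ^ i * x (i + 1) * y (n - (i + 1))) :
    ∀ n, 1 ≤ n →
      Bnd p 1 (Phi p (y n)) ∧ Bnd p ((p:ℚ)⁻¹) (Phi p (y n) - sig p n) := by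
  have hp2 := hp.out.two_le
  intro n
  induction n using Nat.strong_induction_on with
  | _ n IH =>
    intro hn1
    by_cases hc1 : n ≤ p
    · rw [hy1 n hn1 (by omega), Phi_X_le hc1, sig_low hc1, sub_zero]
      have hx : Bnd p ((p:ℚ)⁻¹) (C ((p:ℚ)) * X n) := by
        have := bnd_C_mul (p := p) ((p:ℚ)) (bnd_X n)
        rwa [norm_p_eq, mul_one] at this
      exact ⟨bnd_mono pinv_le_one hx, hx⟩
    by_cases hc2 : n = p + 1
    · rw [hc2, hy1 (p+1) (by omega) le_rfl, Phi_X_gt (by omega), sig_p1 (by omega)]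
      exact ⟨bnd_X _, by rw [sub_self]; exact bnd_zero pinv_nonneg⟩
    · have hn2 : p + 2 ≤ n := by omega
      obtain ⟨e, he, hne⟩ : ∃ e, 1 ≤ e ∧ n = e + 1 + p := ⟨n - p - 1, by omega, by omega⟩
      rw [hyrec n hn2, map_sum]
      have hterm : ∀ i ∈ Finset.range (p+1),
          Phi p ((-1 : MvPolynomial ℕ ℚ) ^ i * x (i + 1) * y (n - (i + 1)))
            = (-1 : MvPolynomial ℕ ℚ) ^ i * Phi p (x (i + 1)) * Phi p (y (n - (i + 1))) :=
        fun i _ => by simp only [map_mul, map_pow, map_neg, map_one]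
      rw [Finset.sum_congr rfl hterm]
      have hyint : ∀ i, i < p + 1 → Bnd p 1 (Phi p (y (n - (i+1)))) := fun i hi =>
        (IH (n - (i+1)) (by omega) (by omega)).1
      constructor
      · refine bnd_sum zero_le_one _ _ fun i hi => ?_
        simp only [Finset.mem_range] at hi
        have h1 := phix_int1 hx0 hxr (i+1) (by omega)
        have := bnd_mul (p := p) zero_le_one zero_le_one
          (bnd_neg_one_pow i h1) (hyint i hi)
        rwa [mul_one] at this
      · -- the congruence part
        obtain ⟨q, hq⟩ : ∃ q, p = q + 1 := ⟨p - 1, by omega⟩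
        have hrange : Finset.range (p+1) = Finset.range (q+1+1) := by rw [hq]
        rw [hrange, Finset.sum_range_succ, Finset.sum_range_succ]
        have hsig : sig p n = X p * sig p (e+1) + X (p+1) * sig p e := by
          rw [hne]; exact sig_rec (by omega) e he
        rw [hsig]
        rw [show ∀ A B C D E : MvPolynomial ℕ ℚ,
            A + B + C - (D + E) = A + (B - D) + (C - E) from
          fun A B C D E => by ring]
        refine bnd_add (bnd_add ?_ ?_) ?_
        · -- small terms, i < q
          refine bnd_sum pinv_nonneg _ _ fun i hi => ?_
          simp only [Finset.mem_range] at hi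
          have hdiv := phix_div hx0 hxr (i+1) (by omega) (by omega)
          have := bnd_mul (p := p) pinv_nonneg zero_le_one
            (bnd_neg_one_pow i hdiv) (hyint i (by omega))
          rwa [mul_one] at this
        · -- middle term
          rw [show n - (q + 1) = e + 1 from by omega]
          have hBint : Bnd p 1 (Phi p (y (e+1))) := by
            have := hyint q (by omega)
            rwa [show n - (q + 1) = e + 1 from by omega] at this
          have hBdiv : Bnd p ((p:ℚ)⁻¹) (Phi p (y (e+1)) - sig p (e+1)) :=
            (IH (e+1) (by omega) (by omega)).2
          have hxp' := phix_p (p := p) hx0 hxr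
          rw [show p - 1 = q from by omega] at hxp'
          have hsq : ((-1 : MvPolynomial ℕ ℚ)) ^ q * (-1) ^ q = 1 := by
            rw [← pow_add]; exact Even.neg_one_pow ⟨q, rfl⟩
          have hkey2 : (-1 : MvPolynomial ℕ ℚ)^q * Phi p (x (q+1)) * Phi p (y (e+1))
                - X p * sig p (e+1)
              = ((-1 : MvPolynomial ℕ ℚ)^q * (Phi p (x (q+1)) - (-1 : MvPolynomial ℕ ℚ)^q * X p))
                  * Phi p (y (e+1))
                + X p * (Phi p (y (e+1)) - sig p (e+1)) := by
            linear_combination (X p * Phi p (y (e+1))) * hsq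
          rw [hkey2]
          refine bnd_add ?_ ?_
          · have hxpq : Bnd p ((p:ℚ)⁻¹)
                (Phi p (x (q+1)) - (-1 : MvPolynomial ℕ ℚ)^q * X p) := by
              rwa [show q + 1 = p from by omega]
            have := bnd_mul (p := p) pinv_nonneg zero_le_one
              (bnd_neg_one_pow q hxpq) hBint
            rwa [mul_one] at this
          · have := bnd_mul (p := p) zero_le_one pinv_nonneg (bnd_X p) hBdiv
            rwa [one_mul] at this
        · -- top term
          rw [show n - (q + 1 + 1) = e from by omega,
            show q + 1 + 1 = p + 1 from by omega]
          have hBint : Bnd p 1 (Phi p (y e)) := by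
            have := hyint (q+1) (by omega)
            rwa [show n - (q + 1 + 1) = e from by omega] at this
          have hBdiv : Bnd p ((p:ℚ)⁻¹) (Phi p (y e) - sig p e) :=
            (IH e (by omega) (by omega)).2
          have hxp1 := phix_p1 (p := p) hx0 hxr
          have hsq : ((-1 : MvPolynomial ℕ ℚ)) ^ p * (-1) ^ p = 1 := by
            rw [← pow_add]; exact Even.neg_one_pow ⟨p, rfl⟩
          rw [show q + 1 = p from by omega]
          have hkey3 : (-1 : MvPolynomial ℕ ℚ)^p * Phi p (x (p+1)) * Phi p (y e)
                - X (p+1) * sig p e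
              = ((-1 : MvPolynomial ℕ ℚ)^p
                    * (Phi p (x (p+1)) - (-1 : MvPolynomial ℕ ℚ)^p * X (p+1)))
                  * Phi p (y e)
                + X (p+1) * (Phi p (y e) - sig p e) := by
            linear_combination (X (p+1) * Phi p (y e)) * hsq
          rw [hkey3]
          refine bnd_add ?_ ?_
          · have := bnd_mul (p := p) pinv_nonneg zero_le_one
              (bnd_neg_one_pow p hxp1) hBint
            rwa [mul_one] at this
          · have := bnd_mul (p := p) zero_le_one pinv_nonneg (bnd_X (p+1)) hBdiv
            rwa [one_mul] at this

end Xfacts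

end PhiAux

/-- With `x_n` given by Newton's recursion and `y_n` extended by the linear recurrence
`y_n = ∑_{i=1}^{p+1} (-1)^{i-1} x_i y_{n-i}` for `n ≥ p+2`: if the base-`p` digit sum of
`n(p-1)` equals `p-1`, then `Φ(y_n) ∈ p ℤ_p[t_1, …, t_{p+1}]`. -/
theorem phi_y_divisible (p : ℕ) (hp : p.Prime)
    (x : ℕ → MvPolynomial ℕ ℚ)
    (hx0 : x 0 = 1)
    (hxr : ∀ n, 1 ≤ n → n ≤ p + 1 →
      x n = (n : ℚ)⁻¹ • ∑ i ∈ Finset.range n,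
        (-1 : MvPolynomial ℕ ℚ) ^ i * x (n - (i + 1)) * MvPolynomial.X (i + 1))
    (y : ℕ → MvPolynomial ℕ ℚ)
    (hy1 : ∀ n, 1 ≤ n → n ≤ p + 1 → y n = MvPolynomial.X n)
    (hyrec : ∀ n, p + 2 ≤ n →
      y n = ∑ i ∈ Finset.range (p + 1),
        (-1 : MvPolynomial ℕ ℚ) ^ i * x (i + 1) * y (n - (i + 1)))
    (n : ℕ) (hn : 1 ≤ n) (hδ : (Nat.digits p (n * (p - 1))).sum = p - 1) :
    CoeffsDivP p (Phi p (y n)) := by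
  haveI : Fact p.Prime := ⟨hp⟩
  have h1 := (PhiAux.main_ind (p := p) hx0 hxr hy1 hyrec n hn).2
  have h2 := PhiAux.sig_div (p := p) n hδ
  have h3 : PhiAux.Bnd p ((p:ℚ)⁻¹) (Phi p (y n)) := by
    have := PhiAux.bnd_add h1 h2
    rwa [sub_add_cancel] at this
  exact PhiAux.coeffsDivP_of_bnd h3
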